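/- arXiv:2412.11546 — 2 statements merged into one kernel-verified Lean document; each statement's English description precedes it below -/
import Mathlib

section
/- For the three-mirror afocal system with d₁ < 0 fixed, the discriminant of the pivot quadratic (−Gd₂+d₁)Ω₁² + 2G(d₂−d₁)Ω₁ + G(Gd₁−d₂) in Ω₁ equals 4Gd₁d₂(G−1)². In particular, for d₁ < 0, d₂ > 0 and G ≠ 0, G ≠ 1, this discriminant is nonnegative if and only if G < 0. -/
/-- Three-mirror afocal system (codimension 2): the discriminant of the pivot
quadratic `(-G d₂ + d₁)Ω₁² + 2G(d₂ - d₁)Ω₁ + G(G d₁ - d₂)` equals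
`4 G d₁ d₂ (G-1)²`, and on the physical region it is nonnegative iff `G < 0`. -/
theorem afocal_discriminant (d₁ d₂ G : ℝ)
    (hd₁ : d₁ < 0) (hd₂ : 0 < d₂) (hG : G ≠ 0) (hG1 : G ≠ 1) :
    (2 * G * (d₂ - d₁)) ^ 2 - 4 * (-G * d₂ + d₁) * (G * (G * d₁ - d₂))
        = 4 * G * d₁ * d₂ * (G - 1) ^ 2
      ∧ (4 * G * d₁ * d₂ * (G - 1) ^ 2 ≥ 0 ↔ G < 0) := by
  have hsq : (0:ℝ) < (G - 1) ^ 2 := by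
    have : G - 1 ≠ 0 := sub_ne_zero.mpr hG1
    positivity
  have hdd : d₁ * d₂ < 0 := mul_neg_of_neg_of_pos hd₁ hd₂
  constructor
  · ring
  · constructor
    · intro h
      by_contra hneg
      push_neg at hneg
      rcases lt_or_eq_of_le hneg with hpos | heq
      · have h1 : G * (d₁ * d₂) < 0 := mul_neg_of_pos_of_neg hpos hdd
        have h2 : (G * (d₁ * d₂)) * ((G - 1) ^ 2) < 0 := mul_neg_of_neg_of_pos h1 hsq
        nlinarith [h2]
      · exact hG heq.symm
    · intro h
      have h1 : 0 < G * (d₁ * d₂) := mul_pos_of_neg_of_neg h hdd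
      have h2 : 0 < (G * (d₁ * d₂)) * ((G - 1) ^ 2) := mul_pos h1 hsq
      nlinarith [h2]
end

section
/- Let V2 = [[1,0],[−V,1]] and D(d,k) = [[1,(−1)^k d],[0,1]] be 2×2 real matrices. For N ≥ 2, mirrors with vergences V_k = 2(−1)^k c_k, curvatures given by c₁ = (1−Ω₁)/(2d₁), c_k = (1−Ω_{k−1})/(2Ω_{k−1}d_{k−1}) + (1−Ω_k)/(2d_k) for 2 ≤ k ≤ N−1, c_N = (1−Ω_{N−1})/(2Ω_{N−1}d_{N−1}) + v'_N/2 (object at infinity, v₁ = 0), and the product M_N = M_{V_N} M_{d_{N−1}} ⋯ M_{d_1} M_{V_1}, we have Ω_{s}·M_N = [[Ω_s², S], [−Ω_s²(−1)^N v'_N, −S(−1)^N v'_N + 1]] where Ω_s = ∏_{i=1}^{N−1} Ω_i and S = ∑_{l=1}^{N−1} (−1)^l d_l Ω_l ∏_{i=l+1}^{N−1} Ω_i². -/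
open Matrix

/-- Mirror transfer matrix with vergence `V = 2(-1)^k c`. -/
noncomputable def mirrorMatrix (c : ℝ) (k : ℕ) : Matrix (Fin 2) (Fin 2) ℝ :=
  !![1, 0; -(2 * (-1 : ℝ) ^ k * c), 1]

/-- Propagation matrix over the signed distance `(-1)^k d_k`. -/
noncomputable def distMatrix (dk : ℝ) (k : ℕ) : Matrix (Fin 2) (Fin 2) ℝ :=
  !![1, (-1 : ℝ) ^ k * dk; 0, 1]

/-- The transfer matrix `M_N = M_{V_N} M_{d_{N-1}} M_{V_{N-1}} ⋯ M_{d_1} M_{V_1}`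
of the first `N` mirrors. -/
noncomputable def transferMatrix (c d : ℕ → ℝ) : ℕ → Matrix (Fin 2) (Fin 2) ℝ
  | 0 => 1
  | 1 => mirrorMatrix (c 1) 1
  | (k + 2) =>
      mirrorMatrix (c (k + 2)) (k + 2) * distMatrix (d (k + 1)) (k + 1) *
        transferMatrix c d (k + 1)

lemma transferMatrix_succ (c d : ℕ → ℝ) (k : ℕ) (hk : 1 ≤ k) :
    transferMatrix c d (k + 1)
      = mirrorMatrix (c (k + 1)) (k + 1) * distMatrix (d k) k * transferMatrix c d k := by
  cases k with
  | zero => omega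
  | succ m => rfl

lemma mul2 (a b c' d' e f g h : ℝ) :
    !![a,b;c',d'] * !![e,f;g,h] = !![a*e+b*g, a*f+b*h; c'*e+d'*g, c'*f+d'*h] :=
  by rw [Matrix.mul_fin_two]

lemma smul2 (r a b c' d' : ℝ) : r • !![a,b;c',d'] = !![r*a,r*b;r*c',r*d'] := by
  rw [Matrix.smul_of]; norm_num [Matrix.smul_cons]

lemma aux (M : ℕ) (hM : 1 ≤ M) (d Ω c : ℕ → ℝ)
    (hΩ : ∀ k ∈ Finset.Icc 1 M, Ω k ≠ 0)
    (hd : ∀ k ∈ Finset.Icc 1 M, d k ≠ 0)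
    (hc₁ : c 1 = (1 - Ω 1) / (2 * d 1))
    (hck : ∀ k, 2 ≤ k → k ≤ M →
      c k = (1 - Ω (k - 1)) / (2 * Ω (k - 1) * d (k - 1)) + (1 - Ω k) / (2 * d k)) :
    (∏ i ∈ Finset.Icc 1 M, Ω i) • (distMatrix (d M) M * transferMatrix c d M)
      = !![(∏ i ∈ Finset.Icc 1 M, Ω i) ^ 2,
            ∑ l ∈ Finset.Icc 1 M, (-1:ℝ)^l * d l * Ω l * ∏ i ∈ Finset.Icc (l+1) M, Ω i ^ 2;
          (∏ i ∈ Finset.Icc 1 M, Ω i) ^ 2 * ((-1:ℝ)^(M+1) * (1 - Ω M) / (Ω M * d M)),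
          (∑ l ∈ Finset.Icc 1 M, (-1:ℝ)^l * d l * Ω l * ∏ i ∈ Finset.Icc (l+1) M, Ω i ^ 2)
            * ((-1:ℝ)^(M+1) * (1 - Ω M) / (Ω M * d M)) + 1] := by
  induction M, hM using Nat.le_induction with
  | base =>
    have h1 : Ω 1 ≠ 0 := hΩ 1 (by simp)
    have h2 : d 1 ≠ 0 := hd 1 (by simp)
    have he : Finset.Icc 2 1 = (∅ : Finset ℕ) := by decide
    simp only [transferMatrix, mirrorMatrix, distMatrix, mul2,
      Finset.Icc_self, Finset.prod_singleton, Finset.sum_singleton, he,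
      Finset.prod_empty, hc₁, smul2]
    norm_num
    refine ⟨⟨?_, ?_⟩, ?_, ?_⟩
    · field_simp
      ring
    · field_simp
    · field_simp
    · field_simp
      ring
  | succ n hn ih =>
    have hΩ1 : Ω (n+1) ≠ 0 := hΩ (n+1) (Finset.mem_Icc.mpr (by omega))
    have hd1 : d (n+1) ≠ 0 := hd (n+1) (Finset.mem_Icc.mpr (by omega))
    have hΩn : Ω n ≠ 0 := hΩ n (Finset.mem_Icc.mpr (by omega))
    have hdn : d n ≠ 0 := hd n (Finset.mem_Icc.mpr (by omega))
    have IH := ih (fun k hk => hΩ k (Finset.Icc_subset_Icc_right (by omega) hk))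
      (fun k hk => hd k (Finset.Icc_subset_Icc_right (by omega) hk))
      (fun k h2 hkn => hck k h2 (by omega))
    set P := ∏ i ∈ Finset.Icc 1 n, Ω i with hP
    set S := ∑ l ∈ Finset.Icc 1 n, (-1:ℝ)^l * d l * Ω l * ∏ i ∈ Finset.Icc (l+1) n, Ω i ^ 2 with hS
    have hprod : ∏ i ∈ Finset.Icc 1 (n+1), Ω i = P * Ω (n+1) :=
      Finset.prod_Icc_succ_top (by omega) _
    have hsum : ∑ l ∈ Finset.Icc 1 (n+1), (-1:ℝ)^l * d l * Ω l *
        ∏ i ∈ Finset.Icc (l+1) (n+1), Ω i ^ 2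
        = S * Ω (n+1)^2 + (-1:ℝ)^(n+1) * d (n+1) * Ω (n+1) := by
      rw [Finset.sum_Icc_succ_top (show 1 ≤ n + 1 by omega)]
      rw [show Finset.Icc (n+1+1) (n+1) = ∅ from Finset.Icc_eq_empty (by omega),
        Finset.prod_empty, mul_one]
      congr 1
      rw [hS, Finset.sum_mul]
      refine Finset.sum_congr rfl fun l hl => ?_
      simp only [Finset.mem_Icc] at hl
      rw [Finset.prod_Icc_succ_top (by omega)]
      ring
    have hT : transferMatrix c d (n+1)
        = mirrorMatrix (c (n+1)) (n+1) * distMatrix (d n) n * transferMatrix c d n :=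
      transferMatrix_succ c d n hn
    have hc : c (n+1) = (1 - Ω n) / (2 * Ω n * d n) + (1 - Ω (n+1)) / (2 * d (n+1)) := by
      have := hck (n+1) (by omega) (le_refl _)
      simpa using this
    rw [hT, hprod, hsum]
    rw [show distMatrix (d (n+1)) (n+1) *
          (mirrorMatrix (c (n+1)) (n+1) * distMatrix (d n) n * transferMatrix c d n)
        = distMatrix (d (n+1)) (n+1) * mirrorMatrix (c (n+1)) (n+1) *
          (distMatrix (d n) n * transferMatrix c d n) by
      simp only [mul_assoc]]
    rw [mul_comm P (Ω (n+1)), mul_smul, ← Matrix.mul_smul, IH]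
    rw [show ((-1:ℝ))^(n+1+1) = -((-1:ℝ)^(n+1)) by rw [pow_succ]; ring]
    set e := ((-1:ℝ))^(n+1) with hedef
    have he : e * e = 1 := by
      rw [hedef, ← pow_add]
      exact Even.neg_one_pow ⟨n+1, rfl⟩
    set W := e * (1 - Ω n) / (Ω n * d n) with hW
    set U := e * (1 - Ω (n+1)) / d (n+1) with hU
    have hUd : e * d (n+1) * U = 1 - Ω (n+1) := by
      rw [hU]
      field_simp
      linear_combination (1 - Ω (n+1)) * he
    have hV : -(2 * e * c (n+1)) = -(W + U) := by
      rw [hc, hW, hU]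
      field_simp
    clear_value P S e W U
    rw [mirrorMatrix, distMatrix]
    rw [← hedef] 
    rw [hV, mul2, mul2]
    ext i j
    fin_cases i <;> fin_cases j <;>
      simp only [Matrix.smul_apply, Matrix.of_apply, Matrix.cons_val', Matrix.cons_val_zero,
        Matrix.cons_val_one, Matrix.head_cons, Matrix.head_fin_const,
        Matrix.empty_val', Matrix.cons_val_fin_one, smul_eq_mul, Fin.mk_zero,
        Fin.mk_one, ← hedef]
    · linear_combination (-(Ω (n+1) * P^2)) * hUd
    · linear_combination (-(Ω (n+1) * S)) * hUd
    · field_simp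
      linear_combination (P^2 * d (n+1) * U) * he + (-(P^2 * e)) * hUd
    · field_simp
      linear_combination (S * Ω (n+1) * d (n+1) * U + d (n+1) * (1 - Ω (n+1))) * he + (-(S * Ω (n+1) * e)) * hUd

/-- Proposition 2.1: closed form of the first-order transfer matrix of an
`N`-mirror telescope with object at infinity. -/
theorem transfer_matrix_closed_form (N : ℕ) (hN : 2 ≤ N)
    (d Ω c : ℕ → ℝ) (v' : ℝ)
    (hΩ : ∀ k ∈ Finset.Icc 1 (N - 1), Ω k ≠ 0)
    (hd : ∀ k ∈ Finset.Icc 1 (N - 1), d k ≠ 0)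
    (hc₁ : c 1 = (1 - Ω 1) / (2 * d 1))
    (hck : ∀ k, 2 ≤ k → k ≤ N - 1 →
      c k = (1 - Ω (k - 1)) / (2 * Ω (k - 1) * d (k - 1)) + (1 - Ω k) / (2 * d k))
    (hcN : c N = (1 - Ω (N - 1)) / (2 * Ω (N - 1) * d (N - 1)) + v' / 2) :
    (∏ i ∈ Finset.Icc 1 (N - 1), Ω i) • transferMatrix c d N
      = !![(∏ i ∈ Finset.Icc 1 (N - 1), Ω i) ^ 2,
            ∑ l ∈ Finset.Icc 1 (N - 1),
              (-1 : ℝ) ^ l * d l * Ω l * ∏ i ∈ Finset.Icc (l + 1) (N - 1), Ω i ^ 2;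
          -(∏ i ∈ Finset.Icc 1 (N - 1), Ω i) ^ 2 * (-1 : ℝ) ^ N * v',
            -(∑ l ∈ Finset.Icc 1 (N - 1),
                (-1 : ℝ) ^ l * d l * Ω l *
                  ∏ i ∈ Finset.Icc (l + 1) (N - 1), Ω i ^ 2) *
              (-1 : ℝ) ^ N * v' + 1] := by
  obtain ⟨m, rfl⟩ : ∃ m, N = m + 1 := ⟨N - 1, by omega⟩
  have hm : 1 ≤ m := by omega
  simp only [Nat.add_sub_cancel] at hΩ hd hck hcN ⊢
  have hΩm : Ω m ≠ 0 := hΩ m (Finset.mem_Icc.mpr (by omega))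
  have hdm : d m ≠ 0 := hd m (Finset.mem_Icc.mpr (by omega))
  have A := aux m hm d Ω c hΩ hd hc₁ hck
  rw [transferMatrix_succ c d m hm, mul_assoc, ← Matrix.mul_smul, A]
  set P := ∏ i ∈ Finset.Icc 1 m, Ω i with hP
  set S := ∑ l ∈ Finset.Icc 1 m, (-1:ℝ)^l * d l * Ω l * ∏ i ∈ Finset.Icc (l+1) m, Ω i ^ 2 with hS
  set e := ((-1:ℝ))^(m+1) with hedef
  set W := e * (1 - Ω m) / (Ω m * d m) with hW
  have hV : -(2 * e * c (m + 1)) = -(W + e * v') := by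
    rw [hcN, hW]
    field_simp
  clear_value P S e W
  rw [mirrorMatrix]
  rw [← hedef]
  rw [hV, mul2]
  ext i j
  fin_cases i <;> fin_cases j <;>
    simp only [Matrix.of_apply, Matrix.cons_val', Matrix.cons_val_zero,
      Matrix.cons_val_one, Matrix.head_cons, Matrix.head_fin_const,
      Matrix.empty_val', Matrix.cons_val_fin_one, Fin.mk_zero, Fin.mk_one] <;>
    ring
end
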